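/- Fix integers n ≥ 1 and p ≥ 1, data points (x̃_1,ỹ_1),…,(x̃_n,ỹ_n) ∈ ℝ^p × ℝ, a vector β ∈ ℝ^p, and a real ρ > 0. Let P̃_n denote the empirical probability measure (1/n)∑_{i=1}^n δ_{(x̃_i,ỹ_i)} on ℝ^p × ℝ. Then the supremum, over all probability measures π on (ℝ^p × ℝ) × (ℝ^p × ℝ) whose first marginal equals P̃_n and which satisfy ∫ ‖(x,y) − (x′,y′)‖² dπ((x,y),(x′,y′)) ≤ ρ, of the integral ∫ (y′ − x′ᵀβ)² dπ((x,y),(x′,y′)), equals ( √((1/n)∑_{i=1}^n (ỹ_i − x̃_iᵀβ)²) + √(ρ(‖β‖² + 1)) )². -/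

import Mathlib

open MeasureTheory
open scoped ENNReal

lemma aux_map_sum {α β : Type*} [MeasurableSpace α] [MeasurableSpace β] {ι : Type*}
    (s : Finset ι) (μ : ι → Measure α) {f : α → β} (hf : Measurable f) :
    (∑ i ∈ s, μ i).map f = ∑ i ∈ s, (μ i).map f := by
  classical
  induction s using Finset.induction_on with
  | empty => simp
  | insert a s ha ih => simp [Finset.sum_insert ha, Measure.map_add _ _ hf, ih]

lemma aux_cs (p : ℕ) (a b : Fin p → ℝ) (s t : ℝ) :
    |(∑ j, a j * b j) + s * t| ≤
      Real.sqrt ((∑ j, a j ^ 2) + s ^ 2) * Real.sqrt ((∑ j, b j ^ 2) + t ^ 2) := by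
  have h : ((∑ j, a j * b j) + s * t) ^ 2 ≤
      ((∑ j, a j ^ 2) + s ^ 2) * ((∑ j, b j ^ 2) + t ^ 2) := by
    have := Finset.sum_mul_sq_le_sq_mul_sq Finset.univ
      (fun o : Option (Fin p) => o.elim s a) (fun o : Option (Fin p) => o.elim t b)
    simpa [Fintype.sum_option, add_comm] using this
  calc |(∑ j, a j * b j) + s * t|
      = Real.sqrt (((∑ j, a j * b j) + s * t) ^ 2) := (Real.sqrt_sq_eq_abs _).symm
    _ ≤ Real.sqrt (((∑ j, a j ^ 2) + s ^ 2) * ((∑ j, b j ^ 2) + t ^ 2)) :=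
        Real.sqrt_le_sqrt h
    _ = _ := Real.sqrt_mul (by positivity) _

set_option maxHeartbeats 1000000 in
theorem stmt_0 (n p : ℕ) (hn : 1 ≤ n) (hp : 1 ≤ p)
    (x : Fin n → Fin p → ℝ) (y : Fin n → ℝ) (β : Fin p → ℝ) (ρ : ℝ) (hρ : 0 < ρ) :
    sSup {r : ℝ≥0∞ |
        ∃ π : Measure (((Fin p → ℝ) × ℝ) × ((Fin p → ℝ) × ℝ)),
          IsProbabilityMeasure π ∧
          π.map Prod.fst = (n : ℝ≥0∞)⁻¹ • ∑ i : Fin n, Measure.dirac (x i, y i) ∧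
          (∫⁻ w, ENNReal.ofReal
              ((∑ j, (w.1.1 j - w.2.1 j) ^ 2) + (w.1.2 - w.2.2) ^ 2) ∂π) ≤
            ENNReal.ofReal ρ ∧
          r = ∫⁻ w, ENNReal.ofReal ((w.2.2 - ∑ j, w.2.1 j * β j) ^ 2) ∂π} =
      ENNReal.ofReal
        ((Real.sqrt ((∑ i, (y i - ∑ j, x i j * β j) ^ 2) / n) +
            Real.sqrt (ρ * ((∑ j, β j ^ 2) + 1))) ^ 2) := by
  classical
  have hn0 : (0:ℝ) < n := by exact_mod_cast hn
  set B2 : ℝ := ∑ j, β j ^ 2 with hB2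
  have hB2nn : 0 ≤ B2 := Finset.sum_nonneg fun _ _ => sq_nonneg _
  have hB2ne : B2 + 1 ≠ 0 := by positivity
  set r : Fin n → ℝ := fun i => y i - ∑ j, x i j * β j with hr
  set M : ℝ := (∑ i, r i ^ 2) / n with hM
  have hMnn : 0 ≤ M := div_nonneg (Finset.sum_nonneg fun _ _ => sq_nonneg _) hn0.le
  set c : ℝ := Real.sqrt (ρ * (B2 + 1)) with hc
  have hcnn : 0 ≤ c := Real.sqrt_nonneg _
  have hc2 : c ^ 2 = ρ * (B2 + 1) := Real.sq_sqrt (by positivity)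
  -- measurability facts
  have meas_res2 : Measurable fun w : ((Fin p → ℝ) × ℝ) × ((Fin p → ℝ) × ℝ) =>
      w.2.2 - ∑ j, w.2.1 j * β j := by fun_prop
  have meas_res1 : Measurable fun w : ((Fin p → ℝ) × ℝ) × ((Fin p → ℝ) × ℝ) =>
      w.1.2 - ∑ j, w.1.1 j * β j := by fun_prop
  have meas_cost : Measurable fun w : ((Fin p → ℝ) × ℝ) × ((Fin p → ℝ) × ℝ) =>
      (∑ j, (w.1.1 j - w.2.1 j) ^ 2) + (w.1.2 - w.2.2) ^ 2 := by fun_prop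
  apply le_antisymm
  · -- upper bound

    apply sSup_le
    rintro R ⟨π, hπ, hmarg, hcost, rfl⟩
    set F : (((Fin p → ℝ) × ℝ) × ((Fin p → ℝ) × ℝ)) → ℝ≥0∞ :=
      fun w => ENNReal.ofReal |w.1.2 - ∑ j, w.1.1 j * β j| with hF
    set G : (((Fin p → ℝ) × ℝ) × ((Fin p → ℝ) × ℝ)) → ℝ≥0∞ :=
      fun w => ENNReal.ofReal (Real.sqrt (B2 + 1) *
        Real.sqrt ((∑ j, (w.1.1 j - w.2.1 j) ^ 2) + (w.1.2 - w.2.2) ^ 2)) with hG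
    have hFm : Measurable F := meas_res1.abs.ennreal_ofReal
    have hGm : Measurable G :=
      (measurable_const.mul (Real.continuous_sqrt.measurable.comp meas_cost)).ennreal_ofReal
    -- pointwise bound
    have hpt : ∀ w, ENNReal.ofReal ((w.2.2 - ∑ j, w.2.1 j * β j) ^ 2) ≤ (F w + G w) ^ (2:ℝ) := by
      intro w
      have costnn : (0:ℝ) ≤ (∑ j, (w.1.1 j - w.2.1 j) ^ 2) + (w.1.2 - w.2.2) ^ 2 := by positivity
      have habs : |w.2.2 - ∑ j, w.2.1 j * β j| ≤ |w.1.2 - ∑ j, w.1.1 j * β j| +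
          Real.sqrt (B2 + 1) *
            Real.sqrt ((∑ j, (w.1.1 j - w.2.1 j) ^ 2) + (w.1.2 - w.2.2) ^ 2) := by
        have key := aux_cs p (fun j => w.1.1 j - w.2.1 j) β (w.1.2 - w.2.2) (-1)
        have e1 : (∑ j, (w.1.1 j - w.2.1 j) * β j) + (w.1.2 - w.2.2) * (-1) =
            (w.2.2 - ∑ j, w.2.1 j * β j) - (w.1.2 - ∑ j, w.1.1 j * β j) := by
          simp only [sub_mul, Finset.sum_sub_distrib]; ring
        rw [e1] at key
        have key2 : |w.2.2 - ∑ j, w.2.1 j * β j| ≤ |w.1.2 - ∑ j, w.1.1 j * β j| +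
            |(w.2.2 - ∑ j, w.2.1 j * β j) - (w.1.2 - ∑ j, w.1.1 j * β j)| := by
          have := abs_sub_abs_le_abs_sub (w.2.2 - ∑ j, w.2.1 j * β j)
            (w.1.2 - ∑ j, w.1.1 j * β j)
          linarith
        refine key2.trans ?_
        have : ((-1:ℝ)) ^ 2 = 1 := by norm_num
        rw [this] at key
        have := key
        nlinarith [Real.sqrt_nonneg ((∑ j, (w.1.1 j - w.2.1 j) ^ 2) + (w.1.2 - w.2.2) ^ 2),
          Real.sqrt_nonneg (B2 + 1), mul_comm (Real.sqrt ((∑ j, (w.1.1 j - w.2.1 j) ^ 2) + (w.1.2 - w.2.2) ^ 2)) (Real.sqrt (B2 + 1))]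
      calc ENNReal.ofReal ((w.2.2 - ∑ j, w.2.1 j * β j) ^ 2)
          = (ENNReal.ofReal |w.2.2 - ∑ j, w.2.1 j * β j|) ^ (2:ℝ) := by
            rw [ENNReal.ofReal_rpow_of_nonneg (abs_nonneg _) (by norm_num : (0:ℝ) ≤ 2)]
            rw [show |w.2.2 - ∑ j, w.2.1 j * β j| ^ (2:ℝ)
                = |w.2.2 - ∑ j, w.2.1 j * β j| ^ (2:ℕ) by
              rw [← Real.rpow_natCast]; norm_num]
            rw [sq_abs]
        _ ≤ (F w + G w) ^ (2:ℝ) := by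
            apply ENNReal.rpow_le_rpow _ (by norm_num : (0:ℝ) ≤ 2)
            rw [hF, hG]
            dsimp only
            rw [← ENNReal.ofReal_add (abs_nonneg _) (by positivity)]
            exact ENNReal.ofReal_le_ofReal habs
    -- Minkowski
    have hmink := ENNReal.lintegral_Lp_add_le (μ := π) hFm.aemeasurable hGm.aemeasurable
      (by norm_num : (1:ℝ) ≤ 2)
    -- value of ∫ F^2
    have measv : Measurable fun v : (Fin p → ℝ) × ℝ => ENNReal.ofReal ((v.2 - ∑ j, v.1 j * β j) ^ 2) := by
      fun_prop
    have hIF : ∫⁻ w, F w ^ (2:ℝ) ∂π = ENNReal.ofReal M := by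
      have e : ∀ w : (((Fin p → ℝ) × ℝ) × ((Fin p → ℝ) × ℝ)), F w ^ (2:ℝ) =
          ENNReal.ofReal ((w.1.2 - ∑ j, w.1.1 j * β j) ^ 2) := by
        intro w
        rw [hF]
        dsimp only
        rw [ENNReal.ofReal_rpow_of_nonneg (abs_nonneg _) (by norm_num : (0:ℝ) ≤ 2)]
        congr 1
        rw [show |w.1.2 - ∑ j, w.1.1 j * β j| ^ (2:ℝ)
            = |w.1.2 - ∑ j, w.1.1 j * β j| ^ (2:ℕ) by rw [← Real.rpow_natCast]; norm_num]
        rw [sq_abs]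
      simp only [e]
      have e2 : ∫⁻ w, ENNReal.ofReal ((w.1.2 - ∑ j, w.1.1 j * β j) ^ 2) ∂π
          = ∫⁻ v, ENNReal.ofReal ((v.2 - ∑ j, v.1 j * β j) ^ 2) ∂(π.map Prod.fst) := by
        rw [lintegral_map measv measurable_fst]
      rw [e2, hmarg, lintegral_smul_measure, lintegral_finset_sum_measure]
      simp only [lintegral_dirac]
      rw [← ENNReal.ofReal_sum_of_nonneg (fun i _ => sq_nonneg _)]
      rw [show ((n:ℝ≥0∞))⁻¹ = ENNReal.ofReal ((n:ℝ))⁻¹ by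
        rw [ENNReal.ofReal_inv_of_pos hn0, ENNReal.ofReal_natCast]]
      rw [smul_eq_mul, ← ENNReal.ofReal_mul (by positivity)]
      rw [hM, hr]
      congr 1
      rw [inv_mul_eq_div]
    -- bound for ∫ G^2
    have hIG : ∫⁻ w, G w ^ (2:ℝ) ∂π ≤ ENNReal.ofReal (c ^ 2) := by
      have e : ∀ w : (((Fin p → ℝ) × ℝ) × ((Fin p → ℝ) × ℝ)), G w ^ (2:ℝ) =
          ENNReal.ofReal (B2 + 1) *
            ENNReal.ofReal ((∑ j, (w.1.1 j - w.2.1 j) ^ 2) + (w.1.2 - w.2.2) ^ 2) := by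
        intro w
        have costnn : (0:ℝ) ≤ (∑ j, (w.1.1 j - w.2.1 j) ^ 2) + (w.1.2 - w.2.2) ^ 2 := by positivity
        rw [hG]
        dsimp only
        rw [ENNReal.ofReal_rpow_of_nonneg (by positivity) (by norm_num : (0:ℝ) ≤ 2)]
        rw [← ENNReal.ofReal_mul (by positivity)]
        congr 1
        rw [show (Real.sqrt (B2 + 1) * Real.sqrt ((∑ j, (w.1.1 j - w.2.1 j) ^ 2) + (w.1.2 - w.2.2) ^ 2)) ^ (2:ℝ)
            = (Real.sqrt (B2 + 1) * Real.sqrt ((∑ j, (w.1.1 j - w.2.1 j) ^ 2) + (w.1.2 - w.2.2) ^ 2)) ^ (2:ℕ) by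
          rw [← Real.rpow_natCast]; norm_num]
        rw [mul_pow, Real.sq_sqrt (by positivity : (0:ℝ) ≤ B2 + 1), Real.sq_sqrt costnn]
      simp only [e]
      rw [lintegral_const_mul _ meas_cost.ennreal_ofReal]
      calc ENNReal.ofReal (B2 + 1) *
            ∫⁻ w, ENNReal.ofReal ((∑ j, (w.1.1 j - w.2.1 j) ^ 2) + (w.1.2 - w.2.2) ^ 2) ∂π
          ≤ ENNReal.ofReal (B2 + 1) * ENNReal.ofReal ρ := mul_le_mul_right hcost _
        _ = ENNReal.ofReal (c ^ 2) := by
            rw [← ENNReal.ofReal_mul (by positivity), hc2]; ring_nf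
    -- combine
    calc ∫⁻ w, ENNReal.ofReal ((w.2.2 - ∑ j, w.2.1 j * β j) ^ 2) ∂π
        ≤ ∫⁻ w, ((F + G) w) ^ (2:ℝ) ∂π := lintegral_mono fun w => hpt w
      _ = ((∫⁻ w, ((F + G) w) ^ (2:ℝ) ∂π) ^ (1/2:ℝ)) ^ (2:ℝ) := by
          rw [← ENNReal.rpow_mul]; norm_num
      _ ≤ ((∫⁻ w, F w ^ (2:ℝ) ∂π) ^ (1/2:ℝ) + (∫⁻ w, G w ^ (2:ℝ) ∂π) ^ (1/2:ℝ)) ^ (2:ℝ) :=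
          ENNReal.rpow_le_rpow hmink (by norm_num)
      _ ≤ (ENNReal.ofReal (Real.sqrt M) + ENNReal.ofReal c) ^ (2:ℝ) := by
          apply ENNReal.rpow_le_rpow _ (by norm_num)
          apply add_le_add
          · rw [hIF, ENNReal.ofReal_rpow_of_nonneg hMnn (by norm_num : (0:ℝ) ≤ 1/2),
              ← Real.sqrt_eq_rpow]
          · calc (∫⁻ w, G w ^ (2:ℝ) ∂π) ^ (1/2:ℝ)
                ≤ (ENNReal.ofReal (c ^ 2)) ^ (1/2:ℝ) := ENNReal.rpow_le_rpow hIG (by norm_num)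
              _ = ENNReal.ofReal c := by
                  rw [ENNReal.ofReal_rpow_of_nonneg (sq_nonneg c) (by norm_num : (0:ℝ) ≤ 1/2)]
                  congr 1
                  rw [← Real.sqrt_eq_rpow, Real.sqrt_sq hcnn]
      _ = ENNReal.ofReal ((Real.sqrt ((∑ i, (y i - ∑ j, x i j * β j) ^ 2) / n) + c) ^ 2) := by
          rw [← ENNReal.ofReal_add (Real.sqrt_nonneg _) hcnn]
          rw [ENNReal.ofReal_rpow_of_nonneg (by positivity) (by norm_num : (0:ℝ) ≤ 2)]
          rw [show (Real.sqrt M + c) ^ (2:ℝ) = (Real.sqrt M + c) ^ (2:ℕ) by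
            rw [← Real.rpow_natCast]; norm_num]


  · -- lower bound : exhibit an optimal coupling
    have hnne : (n:ℝ≥0∞) ≠ 0 := by exact_mod_cast Nat.cast_ne_zero.mpr (by omega)
    have hnnetop : (n:ℝ≥0∞) ≠ ⊤ := ENNReal.natCast_ne_top n
    set D : ℝ := Real.sqrt (B2 + 1) with hD
    have hDpos : 0 < D := Real.sqrt_pos.mpr (by positivity)
    have hD2 : D ^ 2 = B2 + 1 := Real.sq_sqrt (by positivity)
    set a : Fin n → ℝ := fun i => if M = 0 then 1 else r i / Real.sqrt M with ha
    set t : Fin n → ℝ := fun i => a i * Real.sqrt ρ / D with ht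
    have hra : ∀ i, r i = a i * Real.sqrt M := by
      intro i
      by_cases h : M = 0
      · have hsum : ∑ i, r i ^ 2 = 0 := by
          have := hM ▸ h
          field_simp at this
          simpa using this
        have hri : r i = 0 := by
          have := (Finset.sum_eq_zero_iff_of_nonneg
            (fun i _ => sq_nonneg (r i))).mp hsum i (Finset.mem_univ i)
          exact pow_eq_zero_iff (two_ne_zero) |>.mp this
        simp [ha, h, hri]
      · have hMpos : 0 < M := lt_of_le_of_ne hMnn (Ne.symm h)
        have hsM : Real.sqrt M ≠ 0 := by positivity
        simp only [ha, if_neg h]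
        field_simp
    have hsa : ∑ i, a i ^ 2 = n := by
      by_cases h : M = 0
      · simp [ha, h]
      · have hMpos : 0 < M := lt_of_le_of_ne hMnn (Ne.symm h)
        have hS : ∑ i, r i ^ 2 = M * n := by rw [hM]; field_simp
        simp only [ha, if_neg h, div_pow, Real.sq_sqrt hMnn]
        rw [← Finset.sum_div, hS, mul_comm, mul_div_assoc, div_self h, mul_one]
    have ht2 : ∀ i, t i ^ 2 = a i ^ 2 * ρ / (B2 + 1) := by
      intro i
      simp only [ht, div_pow, mul_pow, Real.sq_sqrt hρ.le, hD2]
    have hcosti : ∀ i,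
        (∑ j, (x i j - (x i j - t i * β j)) ^ 2) + (y i - (y i + t i)) ^ 2 = a i ^ 2 * ρ := by
      intro i
      have e1 : ∀ j, (x i j - (x i j - t i * β j)) ^ 2 = t i ^ 2 * β j ^ 2 := by
        intro j; ring
      have e2 : (y i - (y i + t i)) ^ 2 = t i ^ 2 := by ring
      simp only [e1, e2, ← Finset.mul_sum, ← hB2]
      rw [ht2]
      have e3 : a i ^ 2 * ρ / (B2 + 1) * B2 + a i ^ 2 * ρ / (B2 + 1)
          = a i ^ 2 * ρ / (B2 + 1) * (B2 + 1) := by ring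
      rw [e3, div_mul_cancel₀ _ hB2ne]
    have hobji : ∀ i,
        (y i + t i - ∑ j, (x i j - t i * β j) * β j) ^ 2 = a i ^ 2 * (Real.sqrt M + c) ^ 2 := by
      intro i
      have e1 : (y i + t i - ∑ j, (x i j - t i * β j) * β j)
          = r i + t i * (B2 + 1) := by
        simp only [sub_mul, Finset.sum_sub_distrib, hr, hB2]
        rw [show ∑ j, t i * β j * β j = t i * ∑ j, β j ^ 2 by
          rw [Finset.mul_sum]; congr 1; funext j; ring]
        ring
      have e2 : t i * (B2 + 1) = a i * c := by
        rw [ht, hc]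
        rw [Real.sqrt_mul hρ.le, ← hD]
        rw [div_mul_eq_mul_div, mul_assoc, mul_div_assoc]
        congr 1
        rw [← hD2]
        field_simp
      rw [e1, e2, hra i]
      ring
    refine le_sSup ⟨(n:ℝ≥0∞)⁻¹ • ∑ i : Fin n,
      Measure.dirac ((x i, y i), ((fun j => x i j - t i * β j : Fin p → ℝ), y i + t i)),
      ?_, ?_, ?_, ?_⟩
    · constructor
      simp only [Measure.smul_apply, Measure.finset_sum_apply, measure_univ, smul_eq_mul]
      rw [Finset.sum_const, Finset.card_univ, Fintype.card_fin, nsmul_eq_mul, mul_one]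
      exact ENNReal.inv_mul_cancel hnne hnnetop
    · rw [Measure.map_smul, aux_map_sum _ _ measurable_fst]
      simp [Measure.map_dirac' measurable_fst]
    · rw [lintegral_smul_measure, lintegral_finset_sum_measure]
      simp only [lintegral_dirac]
      simp only [hcosti]
      rw [← ENNReal.ofReal_sum_of_nonneg (fun i _ => by positivity)]
      rw [show (∑ i, a i ^ 2 * ρ) = (n:ℝ) * ρ by rw [← Finset.sum_mul, hsa]]
      rw [ENNReal.ofReal_mul (by positivity : (0:ℝ) ≤ (n:ℝ)), ENNReal.ofReal_natCast,
        smul_eq_mul, ← mul_assoc, ENNReal.inv_mul_cancel hnne hnnetop, one_mul]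
    · rw [lintegral_smul_measure, lintegral_finset_sum_measure]
      simp only [lintegral_dirac]
      simp only [hobji]
      rw [← ENNReal.ofReal_sum_of_nonneg (fun i _ => by positivity)]
      rw [show (∑ i, a i ^ 2 * (Real.sqrt M + c) ^ 2) = (n:ℝ) * (Real.sqrt M + c) ^ 2 by
        rw [← Finset.sum_mul, hsa]]
      rw [ENNReal.ofReal_mul (by positivity : (0:ℝ) ≤ (n:ℝ)), ENNReal.ofReal_natCast,
        smul_eq_mul, ← mul_assoc, ENNReal.inv_mul_cancel hnne hnnetop, one_mul]
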